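/- Let neighbourhoods U_0 ⊂ U_1 ⊂ ⋯ ⊂ U_K be nested finite sets of design points and θ̃_k the location estimate on U_k, θ̃_{(j)∖(j−1)} the location estimate on U_j ∖ U_{j−1}, where the location estimator satisfies the partition property (value on a set lies between the min and max of its values on the pieces of any partition). Then for any k < ℓ ≤ K: |θ̃_ℓ − θ̃_k| ≤ max_{k+1 ≤ j ≤ ℓ} |θ̃_{j∖(j−1)} − θ̃_k|. -/

import Mathlib

/-- For a location estimator `m` on finite sets of design points satisfying the
partition property (its value on a set lies between the min and max of its
values on the pieces of any partition), and nested neighbourhoods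
`U 0 ⊊ U 1 ⊊ ⋯ ⊊ U K`, one has for all `k < ℓ ≤ K`:
`|m (U ℓ) − m (U k)| ≤ max_{k+1 ≤ j ≤ ℓ} |m (U j \ U (j−1)) − m (U k)|`. -/
theorem telescoping_bound_via_partition_property
    {ι : Type*} [DecidableEq ι] (m : Finset ι → ℝ)
    (hm : ∀ (n : ℕ) (T : Finset ι) (P : Fin (n + 1) → Finset ι),
      (∀ j, (P j).Nonempty) → (∀ j j', j ≠ j' → Disjoint (P j) (P j')) →
      T = Finset.univ.biUnion P →
      (Finset.univ.inf' Finset.univ_nonempty (fun j => m (P j)) ≤ m T ∧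
        m T ≤ Finset.univ.sup' Finset.univ_nonempty (fun j => m (P j))))
    (K : ℕ) (U : ℕ → Finset ι)
    (hU0 : (U 0).Nonempty)
    (hnest : ∀ j, j < K → U j ⊂ U (j + 1)) :
    ∀ k ℓ : ℕ, ∀ hkl : k < ℓ, ℓ ≤ K →
      |m (U ℓ) - m (U k)| ≤
        (Finset.Icc (k + 1) ℓ).sup' (Finset.nonempty_Icc.mpr hkl)
          (fun j => |m (U j \ U (j - 1)) - m (U k)|) := by
  intro k ℓ hkl hℓK
  -- monotonicity
  have hmono : ∀ a b : ℕ, a ≤ b → b ≤ K → U a ⊆ U b := by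
    intro a b hab hbK
    induction b with
    | zero => exact Nat.le_zero.mp hab ▸ subset_rfl
    | succ n ih =>
      rcases Nat.eq_or_lt_of_le hab with h | h
      · exact h ▸ subset_rfl
      · exact (ih (Nat.lt_succ_iff.mp h) (Nat.le_of_succ_le hbK)).trans
          (hnest n (Nat.lt_of_succ_le hbK)).subset
  set d := ℓ - k with hd
  have hkd : k + d = ℓ := by omega
  -- pieces
  set P' : ℕ → Finset ι := fun i => if i = 0 then U k else U (k + i) \ U (k + i - 1) with hP'
  have hPsub : ∀ i, P' i ⊆ U (k + i) := by
    intro i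
    by_cases h : i = 0
    · simp [hP', h]
    · simp only [hP', if_neg h]; exact Finset.sdiff_subset
  have hPne : ∀ i, i ≤ d → (P' i).Nonempty := by
    intro i hi
    by_cases h : i = 0
    · simp only [hP', if_pos h]
      exact hU0.mono (hmono 0 k (Nat.zero_le _) (le_trans (le_of_lt hkl) hℓK))
    · simp only [hP', if_neg h]
      have h1 : k + i - 1 < K := by omega
      have := hnest (k + i - 1) h1
      rw [show k + i - 1 + 1 = k + i by omega] at this
      exact Finset.sdiff_nonempty.mpr (fun hc => this.2 hc)
  have hPdisj : ∀ i j : ℕ, i < j → j ≤ d → Disjoint (P' i) (P' j) := by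
    intro i j hij hjd
    have h1 : P' j = U (k + j) \ U (k + j - 1) := by
      simp only [hP', if_neg (show j ≠ 0 by omega)]
    have h2 : Disjoint (P' j) (U (k + j - 1)) := by rw [h1]; exact Finset.sdiff_disjoint
    have h3 : P' i ⊆ U (k + j - 1) :=
      (hPsub i).trans (hmono (k + i) (k + j - 1) (by omega) (by omega))
    exact (h2.mono_left subset_rfl).symm.mono_left h3
  -- union
  have hunion : ∀ n, n ≤ d → (Finset.range (n + 1)).biUnion P' = U (k + n) := by
    intro n hn
    induction n with
    | zero => simp [hP']
    | succ n ih =>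
      rw [Finset.range_add_one, Finset.biUnion_insert, ih (by omega)]
      have h1 : P' (n + 1) = U (k + (n + 1)) \ U (k + n) := by
        simp only [hP', if_neg (Nat.succ_ne_zero n),
          show k + (n + 1) - 1 = k + n from by omega]
      rw [h1, Finset.union_comm, Finset.union_sdiff_of_subset
        (hmono (k + n) (k + (n + 1)) (by omega) (by omega))]
  -- apply the partition property
  set P : Fin (d + 1) → Finset ι := fun i => P' i.val with hPdef
  have hne : ∀ j, (P j).Nonempty := fun j => hPne j.val (by omega)
  have hdis : ∀ j j', j ≠ j' → Disjoint (P j) (P j') := by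
    intro j j' hjj
    rcases lt_or_gt_of_ne (fun h => hjj (Fin.ext h) : (j : ℕ) ≠ j') with h | h
    · exact hPdisj j j' h (by omega)
    · exact (hPdisj j' j h (by omega)).symm
  have hT : U ℓ = Finset.univ.biUnion P := by
    rw [← hkd, ← hunion d le_rfl]
    ext x
    simp only [Finset.mem_biUnion, Finset.mem_range, Finset.mem_univ, true_and, hPdef]
    constructor
    · rintro ⟨i, hi, hx⟩; exact ⟨⟨i, hi⟩, hx⟩
    · rintro ⟨i, hx⟩; exact ⟨i.val, i.isLt, hx⟩
  obtain ⟨hinf, hsup⟩ := hm d (U ℓ) P hne hdis hT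
  -- conclude
  set R := (Finset.Icc (k + 1) ℓ).sup' (Finset.nonempty_Icc.mpr hkl)
      (fun j => |m (U j \ U (j - 1)) - m (U k)|) with hR
  have hR0 : 0 ≤ R :=
    le_trans (abs_nonneg (m (U ℓ \ U (ℓ - 1)) - m (U k)))
      (Finset.le_sup' (fun j => |m (U j \ U (j - 1)) - m (U k)|)
        (Finset.mem_Icc.mpr ⟨hkl, le_rfl⟩))
  have key : ∀ i : Fin (d + 1), m (P i) - m (U k) ≤ R ∧ m (U k) - m (P i) ≤ R := by
    intro i
    by_cases h : (i : ℕ) = 0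
    · have : P i = U k := by simp only [hPdef, hP', if_pos h]
      rw [this]; simp [hR0]
    · have hPi : P i = U (k + i) \ U (k + i - 1) := by simp only [hPdef, hP', if_neg h]
      have hmem : k + (i : ℕ) ∈ Finset.Icc (k + 1) ℓ :=
        Finset.mem_Icc.mpr ⟨by omega, by omega⟩
      have hle : |m (U (k + (i:ℕ)) \ U (k + (i:ℕ) - 1)) - m (U k)| ≤ R :=
        Finset.le_sup' (fun j => |m (U j \ U (j - 1)) - m (U k)|) hmem
      rw [hPi]
      constructor
      · exact le_trans (le_abs_self _) hle
      · calc m (U k) - m (U (k + (i:ℕ)) \ U (k + (i:ℕ) - 1))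
            ≤ |m (U (k + (i:ℕ)) \ U (k + (i:ℕ) - 1)) - m (U k)| := by
              rw [abs_sub_comm]; exact le_abs_self _
          _ ≤ R := hle
  rw [abs_sub_le_iff]
  constructor
  · obtain ⟨i₀, _, hi₀⟩ := Finset.exists_mem_eq_sup' (s := (Finset.univ : Finset (Fin (d+1))))
      Finset.univ_nonempty (fun j => m (P j))
    rw [hi₀] at hsup
    exact le_trans (by linarith [hsup]) (key i₀).1
  · obtain ⟨i₁, _, hi₁⟩ := Finset.exists_mem_eq_inf' (s := (Finset.univ : Finset (Fin (d+1))))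
      Finset.univ_nonempty (fun j => m (P j))
    rw [hi₁] at hinf
    exact le_trans (by linarith [hinf]) (key i₁).2
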